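/- arXiv:1101.2511 — 4 statements merged into one kernel-verified Lean document; each statement's English description precedes it below -/
import Mathlib

section
/- The sequence of abelian groups 0 → ℤ → ℚ × ∏_p ℤ_p → (∏_p ℤ_p) ⊗_ℤ ℚ → 0 is exact, where the first map sends n to (n, (n)_p) (diagonal) and the second sends (q, a) to a ⊗ 1 − (1)_p ⊗ q. -/
open scoped TensorProduct

/-- The prime `p` in `Nat.Primes` is prime. -/
instance (p : Nat.Primes) : Fact p.1.Prime := ⟨p.2⟩

/-- The profinite completion of `ℤ`: the product of the `p`-adic integers over all primes. -/
noncomputable abbrev Zhat : Type := ∀ p : Nat.Primes, ℤ_[p.1]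

/-- The diagonal map `ℤ → ℚ × ∏ₚ ℤₚ`, `n ↦ (n, (n)ₚ)`. -/
noncomputable def hasseFirst : ℤ → ℚ × Zhat := fun n => ((n : ℚ), fun p => (n : ℤ_[p.1]))

/-- The difference map `ℚ × ∏ₚ ℤₚ → (∏ₚ ℤₚ) ⊗ ℚ`, `(q, a) ↦ a ⊗ 1 - (1)ₚ ⊗ q`. -/
noncomputable def hasseSecond : ℚ × Zhat → Zhat ⊗[ℤ] ℚ :=
  fun x => x.2 ⊗ₜ[ℤ] (1 : ℚ) - (1 : Zhat) ⊗ₜ[ℤ] x.1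

/-- The bilinear pairing `Zhat × ℚ → ∏ₚ ℚₚ`. -/
noncomputable def hassePairing : Zhat →ₗ[ℤ] ℚ →ₗ[ℤ] (∀ p : Nat.Primes, ℚ_[p.1]) :=
  LinearMap.mk₂ ℤ (fun a q => fun p => (a p : ℚ_[p.1]) * (q : ℚ_[p.1]))
    (fun a b q => by funext p; push_cast [Pi.add_apply]; ring)
    (fun m a q => by funext p; simp only [Pi.smul_apply, zsmul_eq_mul, Pi.mul_apply]; push_cast; ring)
    (fun a q r => by funext p; simp only [Pi.add_apply]; push_cast; ring)
    (fun m a q => by funext p; simp only [Pi.smul_apply, zsmul_eq_mul, smul_eq_mul]; push_cast; ring)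

lemma Zhat.tmul_one_eq_zero {a : Zhat} (h : a ⊗ₜ[ℤ] (1 : ℚ) = 0) : a = 0 := by
  have h2 := congrArg (TensorProduct.lift hassePairing) h
  rw [TensorProduct.lift.tmul, LinearMap.map_zero] at h2
  funext p
  have h3 := congrFun h2 p
  simp only [hassePairing, LinearMap.mk₂_apply, Rat.cast_one, mul_one, Pi.zero_apply] at h3
  simpa using PadicInt.coe_eq_zero.mp h3

/-- Every element of `Zhat` is congruent to an integer modulo `n`. -/
lemma Zhat.exists_decomp : ∀ n : ℕ, 0 < n → ∀ a : Zhat,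
    ∃ (r : ℤ) (b : Zhat), ∀ p : Nat.Primes,
      a p = (n : ℤ_[p.1]) * b p + (r : ℤ_[p.1]) := by
  intro n
  induction n using Nat.recOnPosPrimePosCoprime with
  | prime_pow p k hp hk =>
    intro _ a
    haveI : Fact p.Prime := ⟨hp⟩
    set P : Nat.Primes := ⟨p, hp⟩ with hP
    set r : ℕ := (a P).appr k with hr
    have key : ∀ q : Nat.Primes, ∃ c : ℤ_[q.1],
        a q = (p : ℤ_[q.1]) ^ k * c + (r : ℤ_[q.1]) := by
      intro q
      rcases eq_or_ne q P with h | hq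
      · subst h
        obtain ⟨c, hc⟩ := Ideal.mem_span_singleton.mp (PadicInt.appr_spec k (a P))
        exact ⟨c, by linear_combination hc⟩
      · have hunit : IsUnit ((p : ℤ_[q.1])) := by
          rw [PadicInt.isUnit_iff]
          refine le_antisymm (PadicInt.norm_le_one _) ?_
          by_contra hlt
          push_neg at hlt
          have : ((q.1 : ℤ)) ∣ (p : ℤ) := by
            have := (PadicInt.norm_int_lt_one_iff_dvd (p := q.1) (p : ℤ)).mp (by push_cast; exact hlt)
            exact this
          have hdvd : q.1 ∣ p := Int.ofNat_dvd.mp (by exact_mod_cast this)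
          have : q.1 = p := (Nat.prime_dvd_prime_iff_eq q.2 hp).mp hdvd
          exact hq (Subtype.ext this)
        obtain ⟨u, hu⟩ := hunit.pow k
        refine ⟨(↑u⁻¹ : ℤ_[q.1]) * (a q - (r : ℤ_[q.1])), ?_⟩
        rw [← hu, ← mul_assoc, u.mul_inv, one_mul]
        ring
    refine ⟨(r : ℤ), fun q => (key q).choose, fun q => ?_⟩
    have := (key q).choose_spec
    push_cast
    push_cast at this
    exact this
  | zero => intro h; exact absurd h (lt_irrefl 0)
  | one => intro _ a; exact ⟨0, a, fun p => by push_cast; ring⟩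
  | coprime n₁ n₂ hn₁ hn₂ hcop ih1 ih2 =>
    intro _ a
    obtain ⟨r₁, b₁, h1'⟩ := ih1 (by omega) a
    obtain ⟨r₂, b₂, h2'⟩ := ih2 (by omega) a
    obtain ⟨u, v, huv⟩ := Nat.isCoprime_iff_coprime.mpr hcop
    refine ⟨u * n₁ * r₂ + v * n₂ * r₁,
      fun q => (u : ℤ_[q.1]) * b₂ q + (v : ℤ_[q.1]) * b₁ q, fun q => ?_⟩
    have hc : (u : ℤ_[q.1]) * (n₁ : ℤ_[q.1]) + (v : ℤ_[q.1]) * (n₂ : ℤ_[q.1]) = 1 := by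
      exact_mod_cast congrArg (fun z : ℤ => (z : ℤ_[q.1])) huv
    push_cast
    linear_combination ((u : ℤ_[q.1]) * (n₁ : ℤ_[q.1])) * (h2' q)
      + ((v : ℤ_[q.1]) * (n₂ : ℤ_[q.1])) * (h1' q) - (a q) * hc

lemma hasseSecond_add (x y : ℚ × Zhat) :
    hasseSecond (x + y) = hasseSecond x + hasseSecond y := by
  simp only [hasseSecond, Prod.fst_add, Prod.snd_add, TensorProduct.add_tmul,
    TensorProduct.tmul_add]
  abel

lemma hasseSecond_surj_inv (a : Zhat) (n : ℕ) (hn : 0 < n) :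
    ∃ x, hasseSecond x = a ⊗ₜ[ℤ] ((n : ℚ)⁻¹) := by
  obtain ⟨r, b, hb⟩ := Zhat.exists_decomp n hn a
  have ha : a = (n : ℕ) • b + r • (1 : Zhat) := by
    funext p
    simpa [nsmul_eq_mul, zsmul_eq_mul] using hb p
  refine ⟨(-(r / n : ℚ), b), ?_⟩
  rw [hasseSecond]
  dsimp only
  rw [ha, TensorProduct.add_tmul, TensorProduct.smul_tmul, TensorProduct.smul_tmul,
    TensorProduct.tmul_neg]
  have h1 : (n : ℕ) • ((n : ℚ)⁻¹) = 1 := by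
    rw [nsmul_eq_mul]
    field_simp
  have h2 : r • ((n : ℚ)⁻¹) = (r / n : ℚ) := by
    rw [zsmul_eq_mul]; ring
  rw [h1, h2]
  abel

/-- The arithmetic Hasse square: the sequence
`0 → ℤ → ℚ × ∏ₚ ℤₚ → (∏ₚ ℤₚ) ⊗ ℚ → 0` is exact. -/
theorem hasse_square_exact :
    Function.Injective hasseFirst ∧ Function.Exact hasseFirst hasseSecond ∧
      Function.Surjective hasseSecond := by
  refine ⟨?_, ?_, ?_⟩
  · intro m n h
    have := congrArg Prod.fst h
    simpa [hasseFirst] using this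
  · intro y
    constructor
    · intro hy
      obtain ⟨q, a⟩ := y
      simp only [hasseSecond] at hy
      rw [sub_eq_zero] at hy
      -- multiply by the denominator
      have key : ((q.den : ℤ) • a - q.num • (1 : Zhat)) ⊗ₜ[ℤ] (1 : ℚ) = 0 := by
        have e1 : ((q.den : ℤ) • a) ⊗ₜ[ℤ] (1 : ℚ) = (1 : Zhat) ⊗ₜ[ℤ] ((q.num : ℚ)) := by
          rw [← TensorProduct.smul_tmul', hy, ← TensorProduct.tmul_smul]
          congr 1
          rw [zsmul_eq_mul]
          push_cast
          rw [mul_comm]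
          exact_mod_cast Rat.mul_den_eq_num q
        have e2 : (q.num • (1 : Zhat)) ⊗ₜ[ℤ] (1 : ℚ) = (1 : Zhat) ⊗ₜ[ℤ] ((q.num : ℚ)) := by
          rw [TensorProduct.smul_tmul]
          congr 1
          simp [zsmul_eq_mul]
        rw [TensorProduct.sub_tmul, e1, e2, sub_self]
      have h0 := Zhat.tmul_one_eq_zero key
      have hcomp : ∀ p : Nat.Primes, ((q.den : ℤ) : ℤ_[p.1]) * a p = (q.num : ℤ_[p.1]) := by
        intro p
        have := congrFun h0 p
        simp only [Pi.sub_apply, Pi.smul_apply, zsmul_eq_mul, Pi.one_apply, mul_one,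
          Pi.zero_apply, sub_eq_zero] at this
        exact this
      have hden : q.den = 1 := by
        by_contra hd
        obtain ⟨p, pp, pdvd⟩ := Nat.exists_prime_and_dvd hd
        haveI : Fact p.Prime := ⟨pp⟩
        set P : Nat.Primes := ⟨p, pp⟩
        have hden_dvd : (p : ℤ_[P.1]) ∣ ((q.den : ℤ) : ℤ_[P.1]) := by
          exact_mod_cast (Nat.cast_dvd_cast pdvd : (p : ℤ_[P.1]) ∣ (q.den : ℤ_[P.1]))
        have h1 : (p : ℤ_[P.1]) ∣ (q.num : ℤ_[P.1]) := by
          rw [← hcomp P]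
          exact hden_dvd.mul_right _
        have h2 : (p : ℤ) ∣ q.num :=
          (PadicInt.norm_int_lt_one_iff_dvd q.num).mp
            ((PadicInt.norm_lt_one_iff_dvd _).mpr h1)
        have h3 : p ∣ q.num.natAbs := by
          simpa using Int.natAbs_dvd_natAbs.mpr h2
        have : p ∣ Nat.gcd q.num.natAbs q.den := Nat.dvd_gcd h3 pdvd
        rw [q.reduced] at this
        exact pp.one_lt.ne' (Nat.dvd_one.mp this)
      have hq : (q.num : ℚ) = q := Rat.coe_int_num_of_den_eq_one hden
      refine ⟨q.num, ?_⟩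
      rw [hasseFirst]
      refine Prod.ext (by simpa using hq) ?_
      funext p
      have := hcomp p
      rw [hden] at this
      simpa using this.symm
    · rintro ⟨n, rfl⟩
      simp only [hasseSecond, hasseFirst]
      have : (fun p : Nat.Primes => (n : ℤ_[p.1])) = n • (1 : Zhat) := by
        funext p; simp [zsmul_eq_mul]
      rw [this, TensorProduct.smul_tmul]
      norm_num
  · intro z
    induction z using TensorProduct.induction_on with
    | zero => exact ⟨(0, 0), by simp [hasseSecond]⟩
    | tmul a q =>
      have hq : q = q.num • ((q.den : ℚ))⁻¹ := by
        rw [zsmul_eq_mul, ← div_eq_mul_inv, Rat.num_div_den]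
      obtain ⟨x, hx⟩ := hasseSecond_surj_inv (q.num • a) q.den q.pos
      refine ⟨x, ?_⟩
      rw [hx, TensorProduct.smul_tmul, ← hq]
    | add u v hu hv =>
      obtain ⟨x, hx⟩ := hu
      obtain ⟨y, hy⟩ := hv
      exact ⟨x + y, by rw [hasseSecond_add, hx, hy]⟩
end

section
/- Let A = ∏_p ℤ_p. For every abelian group M, the natural map M → (M ⊗ ℚ) ×_{M ⊗ A ⊗ ℚ} (M ⊗ A) into the pullback is an isomorphism; equivalently, the sequence 0 → M → (M ⊗ ℚ) ⊕ (M ⊗ A) → M ⊗ A ⊗ ℚ → 0 is exact. -/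
set_option synthInstance.maxHeartbeats 1000000
set_option maxHeartbeats 2000000

open scoped TensorProduct

variable (M : Type) [AddCommGroup M]

/-- The map `M → (M ⊗ ℚ) ⊕ (M ⊗ ∏ₚ ℤₚ)`, `m ↦ (m ⊗ 1, m ⊗ 1)`. -/
noncomputable def fractureFirst : M →ₗ[ℤ] (M ⊗[ℤ] ℚ) × (M ⊗[ℤ] Zhat) :=
  ((TensorProduct.mk ℤ M ℚ).flip (1 : ℚ)).prod ((TensorProduct.mk ℤ M Zhat).flip (1 : Zhat))

/-- The difference map `(M ⊗ ℚ) ⊕ (M ⊗ ∏ₚ ℤₚ) → M ⊗ (∏ₚ ℤₚ) ⊗ ℚ`,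
`(x, y) ↦ (image of x) - (image of y)`, where the images are induced by
`ℚ → (∏ₚ ℤₚ) ⊗ ℚ`, `q ↦ 1 ⊗ q` and `∏ₚ ℤₚ → (∏ₚ ℤₚ) ⊗ ℚ`, `a ↦ a ⊗ 1`. -/
noncomputable def fractureSecond :
    (M ⊗[ℤ] ℚ) × (M ⊗[ℤ] Zhat) →ₗ[ℤ] M ⊗[ℤ] (Zhat ⊗[ℤ] ℚ) :=
  (LinearMap.lTensor M ((TensorProduct.mk ℤ Zhat ℚ) (1 : Zhat))).comp
      (LinearMap.fst ℤ (M ⊗[ℤ] ℚ) (M ⊗[ℤ] Zhat)) -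
    (LinearMap.lTensor M ((TensorProduct.mk ℤ Zhat ℚ).flip (1 : ℚ))).comp
      (LinearMap.snd ℤ (M ⊗[ℤ] ℚ) (M ⊗[ℤ] Zhat))

namespace Fracture

/-! ### Basic facts about `Zhat` -/

lemma one_ne_zero_Zhat : (1 : Zhat) ≠ 0 := fun h => by
  have := congrFun h ⟨2, Nat.prime_two⟩
  exact one_ne_zero this

instance : NoZeroSMulDivisors ℤ Zhat := by
  constructor
  intro a x h
  by_cases ha : a = 0
  · exact Or.inl ha
  · refine Or.inr (funext fun p => ?_)
    have hp : a • x p = 0 := by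
      have := congrFun h p
      simpa using this
    rw [zsmul_eq_mul] at hp
    rcases mul_eq_zero.mp hp with h' | h'
    · exact absurd (Int.cast_eq_zero.mp h') ha
    · exact h'

/-- A torsion-free abelian group is flat over `ℤ`. -/
theorem flat_of_torsionFree (N : Type) [AddCommGroup N] [NoZeroSMulDivisors ℤ N] :
    Module.Flat ℤ N := by
  rw [Module.Flat.iff_rTensor_injective]
  intro I _
  obtain ⟨d, rfl⟩ : ∃ d : ℤ, I = Ideal.span {d} :=
    ⟨Submodule.IsPrincipal.generator I, (Ideal.span_singleton_generator I).symm⟩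
  by_cases hd : d = 0
  · subst hd
    have hbot : (Ideal.span {(0:ℤ)}) = ⊥ := by simp
    haveI : Subsingleton (Ideal.span {(0:ℤ)}) := by
      rw [hbot]; infer_instance
    exact Function.injective_of_subsingleton _
  · have hinj : Function.Injective (LinearMap.toSpanSingleton ℤ ℤ d) := by
      intro u v huv
      simp only [LinearMap.toSpanSingleton_apply, smul_eq_mul] at huv
      exact mul_right_cancel₀ hd huv
    set e : ℤ ≃ₗ[ℤ] (Ideal.span {d} : Ideal ℤ) :=
      (LinearEquiv.ofInjective _ hinj).trans
        (LinearEquiv.ofEq _ _ (LinearMap.span_singleton_eq_range ℤ ℤ d).symm) with he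
    have hsub : (Ideal.span {d}).subtype ∘ₗ (e : ℤ →ₗ[ℤ] Ideal.span {d}) =
        LinearMap.toSpanSingleton ℤ ℤ d := by
      ext
      rfl
    set L := TensorProduct.lid ℤ N
    have heq : L.toLinearMap ∘ₗ (LinearMap.rTensor N (LinearMap.toSpanSingleton ℤ ℤ d))
        ∘ₗ L.symm.toLinearMap = d • LinearMap.id := by
      ext n
      simp [L, TensorProduct.lid_symm_apply, mul_comm]
    have hz : ∀ z, L (LinearMap.rTensor N (LinearMap.toSpanSingleton ℤ ℤ d) z) = d • L z := by
      intro z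
      have := LinearMap.congr_fun heq (L z)
      simpa using this
    have key : Function.Injective (LinearMap.rTensor N (LinearMap.toSpanSingleton ℤ ℤ d)) := by
      intro x y hxy
      have : d • L x = d • L y := by rw [← hz, ← hz, hxy]
      exact L.injective (smul_right_injective N hd this)
    have hcomp : (LinearMap.rTensor N (Ideal.span {d}).subtype) ∘ₗ
        (LinearMap.rTensor N (e : ℤ →ₗ[ℤ] Ideal.span {d})) =
        LinearMap.rTensor N (LinearMap.toSpanSingleton ℤ ℤ d) := by
      rw [← LinearMap.rTensor_comp, hsub]
    intro x y hxy
    obtain ⟨x', rfl⟩ := LinearMap.rTensor_surjective N (g := (e : ℤ →ₗ[ℤ] Ideal.span {d}))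
      e.surjective x
    obtain ⟨y', rfl⟩ := LinearMap.rTensor_surjective N (g := (e : ℤ →ₗ[ℤ] Ideal.span {d}))
      e.surjective y
    have hxy' : LinearMap.rTensor N (LinearMap.toSpanSingleton ℤ ℤ d) x' =
        LinearMap.rTensor N (LinearMap.toSpanSingleton ℤ ℤ d) y' := by
      rw [← hcomp]; exact hxy
    rw [key hxy']

instance : Module.Flat ℤ Zhat := flat_of_torsionFree Zhat

lemma isUnit_of_smul_eq_one {d : ℤ} (u : Zhat) (h : d • u = 1) : IsUnit d := by
  have hd0 : d ≠ 0 := by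
    rintro rfl
    rw [zero_smul] at h
    exact one_ne_zero_Zhat h.symm
  by_contra hne
  have hna : d.natAbs ≠ 1 := fun h1 => hne (Int.isUnit_iff.mpr (Int.natAbs_eq_iff.mp h1))
  obtain ⟨p, pp, hpd⟩ := Nat.exists_prime_and_dvd hna
  haveI : Fact p.Prime := ⟨pp⟩
  set P : Nat.Primes := ⟨p, pp⟩
  have hc : (d : ℤ_[p]) * u P = 1 := by
    have := congrFun h P
    simpa [zsmul_eq_mul] using this
  have hunit : IsUnit (d : ℤ_[p]) := ⟨Units.mkOfMulEqOne _ _ hc, rfl⟩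
  have hdvd : (p : ℤ) ∣ d := Int.dvd_natAbs.mp (Int.natCast_dvd_natCast.mpr hpd)
  have hlt : ‖(d : ℤ_[p])‖ < 1 := (PadicInt.norm_int_lt_one_iff_dvd d).mpr hdvd
  rw [PadicInt.isUnit_iff.mp hunit] at hlt
  exact lt_irrefl 1 hlt

/-! ### The Hasse (fracture) square for `ℤ` itself -/

/-- The map `ℤ → ℚ × Zhat`. -/
noncomputable def f0 : ℤ →ₗ[ℤ] ℚ × Zhat :=
  (Algebra.linearMap ℤ ℚ).prod (Algebra.linearMap ℤ Zhat)

/-- The difference map `ℚ × Zhat → Zhat ⊗ ℚ`. -/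
noncomputable def g0 : ℚ × Zhat →ₗ[ℤ] Zhat ⊗[ℤ] ℚ :=
  ((TensorProduct.mk ℤ Zhat ℚ) (1 : Zhat)).comp (LinearMap.fst ℤ ℚ Zhat)
    - ((TensorProduct.mk ℤ Zhat ℚ).flip (1 : ℚ)).comp (LinearMap.snd ℤ ℚ Zhat)

@[simp] lemma f0_apply (n : ℤ) : f0 n = ((n : ℚ), (n : Zhat)) := by
  simp [f0]

@[simp] lemma g0_apply (q : ℚ) (a : Zhat) :
    g0 (q, a) = (1 : Zhat) ⊗ₜ[ℤ] q - a ⊗ₜ[ℤ] (1 : ℚ) := by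
  rfl

lemma tensor_one_injective :
    Function.Injective (fun x : Zhat => x ⊗ₜ[ℤ] (1 : ℚ)) := by
  have h : (fun x : Zhat => x ⊗ₜ[ℤ] (1 : ℚ)) =
      (LinearMap.lTensor Zhat (Algebra.linearMap ℤ ℚ)) ∘ ⇑(TensorProduct.rid ℤ Zhat).symm := by
    funext x
    simp [TensorProduct.rid_symm_apply]
  rw [h]
  exact (Module.Flat.lTensor_preserves_injective_linearMap _
    (fun a b hab => by
      have : (a : ℚ) = (b : ℚ) := by simpa using hab
      exact_mod_cast this)).comp (TensorProduct.rid ℤ Zhat).symm.injective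

lemma int_tmul (n : ℤ) : (1 : Zhat) ⊗ₜ[ℤ] ((n : ℚ)) = ((n : Zhat)) ⊗ₜ[ℤ] (1 : ℚ) := by
  have h1 : ((n : ℚ)) = n • (1 : ℚ) := by simp
  have h2 : ((n : Zhat)) = n • (1 : Zhat) := by simp
  rw [h1, h2, TensorProduct.smul_tmul]

lemma exact0 : Function.Exact f0 g0 := by
  rintro ⟨q, a⟩
  constructor
  · intro h
    rw [g0_apply, sub_eq_zero] at h
    have hq : (q.den : ℚ) * q = (q.num : ℚ) := by
      rw [mul_comm]
      exact_mod_cast Rat.mul_den_eq_num q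
    have h2 : ((q.den : ℤ) • a) ⊗ₜ[ℤ] (1 : ℚ) = ((q.num : Zhat)) ⊗ₜ[ℤ] (1 : ℚ) := by
      calc ((q.den : ℤ) • a) ⊗ₜ[ℤ] (1 : ℚ) = (q.den : ℤ) • (a ⊗ₜ[ℤ] (1:ℚ)) :=
            (TensorProduct.smul_tmul' _ _ _)
        _ = (q.den : ℤ) • ((1:Zhat) ⊗ₜ[ℤ] q) := by rw [h]
        _ = (1:Zhat) ⊗ₜ[ℤ] ((q.den : ℤ) • q) := by rw [TensorProduct.tmul_smul]
        _ = (1:Zhat) ⊗ₜ[ℤ] ((q.num : ℚ)) := by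
              congr 1
        _ = ((q.num : Zhat)) ⊗ₜ[ℤ] (1 : ℚ) := int_tmul q.num
    have h4 : (q.den : ℤ) • a = (q.num : Zhat) := tensor_one_injective h2
    have hden : q.den = 1 := by
      by_contra hne
      obtain ⟨p, pp, hpdvd⟩ := Nat.exists_prime_and_dvd hne
      haveI : Fact p.Prime := ⟨pp⟩
      set P : Nat.Primes := ⟨p, pp⟩
      have hc : ((q.den : ℤ) : ℤ_[p]) * a P = ((q.num : ℤ) : ℤ_[p]) := by
        have := congrFun h4 P
        simpa [zsmul_eq_mul] using this
      have hnormden : ‖((q.den : ℤ) : ℤ_[p])‖ < 1 :=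
        (PadicInt.norm_int_lt_one_iff_dvd _).mpr (Int.natCast_dvd_natCast.mpr hpdvd)
      have hnormnum : ‖((q.num : ℤ) : ℤ_[p])‖ < 1 := by
        rw [← hc]
        calc ‖((q.den : ℤ) : ℤ_[p]) * a P‖ = ‖((q.den : ℤ) : ℤ_[p])‖ * ‖a P‖ :=
              norm_mul _ _
          _ ≤ ‖((q.den : ℤ) : ℤ_[p])‖ * 1 :=
              mul_le_mul_of_nonneg_left (PadicInt.norm_le_one _) (norm_nonneg _)
          _ < 1 := by rwa [mul_one]
      have hpnum : (p:ℤ) ∣ q.num := (PadicInt.norm_int_lt_one_iff_dvd _).mp hnormnum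
      have hp1 : p ∣ q.num.natAbs := Int.natCast_dvd_natCast.mp (Int.dvd_natAbs.mpr hpnum)
      have := Nat.dvd_gcd hp1 hpdvd
      rw [Nat.Coprime.gcd_eq_one q.reduced] at this
      exact pp.one_lt.ne' (Nat.dvd_one.mp this)
    have hq1 : q = (q.num : ℚ) := by
      conv_lhs => rw [← Rat.num_div_den q]
      rw [hden]
      simp
    have ha : a = (q.num : Zhat) := by
      rw [← h4, hden]
      simp
    exact ⟨q.num, by rw [f0_apply]; exact Prod.ext hq1.symm ha.symm⟩
  · rintro ⟨n, hn⟩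
    rw [f0_apply] at hn
    cases hn
    rw [g0_apply, int_tmul n, sub_self]

/-- Density of `ℤ` in `Zhat`: every element is an integer plus `n` times something. -/
lemma key_crt (n : ℕ) (hn : 0 < n) (a : Zhat) :
    ∃ (r : ℤ) (b : Zhat), a = (r : Zhat) + (n : Zhat) * b := by
  induction n using Nat.recOnPosPrimePosCoprime generalizing a with
  | prime_pow p k hp hk =>
    haveI hpp : Fact (Nat.Prime p) := ⟨hp⟩
    set P : Nat.Primes := ⟨p, hpp.out⟩
    set r : ℤ := ((PadicInt.toZModPow k (a P)).val : ℤ) with hr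
    haveI : NeZero (p ^ k) := ⟨pow_ne_zero k hpp.out.ne_zero⟩
    have hdvd : ∀ q : Nat.Primes, ((p : ℤ_[q.1]) ^ k) ∣ (a q - (r : ℤ_[q.1])) := by
      intro q
      by_cases hq : q = P
      · subst hq
        have hker : PadicInt.toZModPow k (a P - (r : ℤ_[P.1])) = 0 := by
          rw [map_sub, map_intCast, hr]
          push_cast
          rw [ZMod.natCast_val, ZMod.cast_id, sub_self]
        have hmem : a P - (r : ℤ_[P.1]) ∈ RingHom.ker (PadicInt.toZModPow (p := P.1) k) := by
          rw [RingHom.mem_ker]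
          exact hker
        rw [PadicInt.ker_toZModPow] at hmem
        exact Ideal.mem_span_singleton.mp hmem
      · apply IsUnit.dvd
        apply IsUnit.pow
        rw [PadicInt.isUnit_iff]
        rcases lt_or_eq_of_le (PadicInt.norm_le_one (p : ℤ_[q.1])) with hlt | heq
        · exfalso
          have hdp : ((q.1 : ℤ)) ∣ (p : ℤ) := by
            rw [← PadicInt.norm_int_lt_one_iff_dvd]
            simpa using hlt
          have hqp : q.1 ∣ p := Int.natCast_dvd_natCast.mp hdp
          exact hq (Subtype.ext ((Nat.prime_dvd_prime_iff_eq q.2 hpp.out).mp hqp))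
        · exact heq
    choose c hc using hdvd
    refine ⟨r, c, funext fun q => ?_⟩
    have h := hc q
    simp only [Pi.add_apply, Pi.mul_apply, Pi.intCast_apply, Pi.natCast_apply]
    push_cast
    linear_combination h
  | zero => exact absurd hn (lt_irrefl 0)
  | one => exact ⟨0, a, by simp⟩
  | coprime m k hm hk hcop ihm ihk =>
    obtain ⟨r₁, b₁, h₁⟩ := ihm (by omega) a
    obtain ⟨r₂, b₂, h₂⟩ := ihk (by omega) a
    have hc : IsCoprime (m : ℤ) (k : ℤ) := Int.isCoprime_iff_gcd_eq_one.mpr (by simpa using hcop)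
    obtain ⟨u, v, huv⟩ := hc
    refine ⟨r₂ * u * m + r₁ * v * k, (u : Zhat) * b₂ + (v : Zhat) * b₁, ?_⟩
    have hz : (u : Zhat) * (m : Zhat) + (v : Zhat) * (k : Zhat) = 1 := by
      have := congrArg (fun z : ℤ => (z : Zhat)) huv
      push_cast at this
      exact this
    push_cast
    linear_combination ((u : Zhat) * (m : Zhat)) * h₂ + ((v : Zhat) * (k : Zhat)) * h₁ - a * hz

lemma surj0 : Function.Surjective g0 := by
  intro z
  induction z using TensorProduct.induction_on with
  | zero => exact ⟨0, map_zero _⟩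
  | add x y hx hy =>
      obtain ⟨x', rfl⟩ := hx
      obtain ⟨y', rfl⟩ := hy
      exact ⟨x' + y', map_add _ _ _⟩
  | tmul a q =>
    obtain ⟨r, b, hab⟩ := key_crt q.den q.pos (q.num • a)
    refine ⟨((r : ℚ) / (q.den : ℚ), -b), ?_⟩
    rw [g0_apply, TensorProduct.neg_tmul, sub_neg_eq_add]
    have hden : ((q.den : ℚ)) ≠ 0 := Nat.cast_ne_zero.mpr q.den_nz
    have e2 : a ⊗ₜ[ℤ] q = ((q.num • a)) ⊗ₜ[ℤ] ((q.den : ℚ))⁻¹ := by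
      rw [TensorProduct.smul_tmul]
      congr 1
      rw [zsmul_eq_mul]
      rw [mul_comm, ← div_eq_inv_mul]
      exact (Rat.num_div_den q).symm
    have e4 : ((r : Zhat)) ⊗ₜ[ℤ] ((q.den : ℚ))⁻¹ = (1 : Zhat) ⊗ₜ[ℤ] ((r : ℚ) / (q.den : ℚ)) := by
      have h1 : (r : Zhat) = r • (1 : Zhat) := by simp
      rw [h1, TensorProduct.smul_tmul]
      congr 1
    have e5 : ((q.den : Zhat) * b) ⊗ₜ[ℤ] ((q.den : ℚ))⁻¹ = b ⊗ₜ[ℤ] (1 : ℚ) := by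
      have h1 : (q.den : Zhat) * b = (q.den : ℤ) • b := by
        rw [zsmul_eq_mul]
        push_cast
        ring
      rw [h1, TensorProduct.smul_tmul]
      congr 1
      rw [zsmul_eq_mul]
      push_cast
      field_simp
    rw [e2, hab, TensorProduct.add_tmul, e4, e5]

/-! ### Injectivity of the first map -/

theorem first_inj : Function.Injective (fractureFirst M) := by
  have h0 : ∀ m : M, fractureFirst M m = 0 → m = 0 := by
    intro m hm
    have hZ : m ⊗ₜ[ℤ] (1 : Zhat) = 0 := by
      have := congrArg Prod.snd hm
      exact this
    set f := LinearMap.toSpanSingleton ℤ M m with hf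
    obtain ⟨d, hd⟩ : ∃ d : ℤ, LinearMap.ker f = Ideal.span {d} :=
      ⟨Submodule.IsPrincipal.generator (LinearMap.ker f),
        (Ideal.span_singleton_generator _).symm⟩
    have hexact : Function.Exact (LinearMap.toSpanSingleton ℤ ℤ d) f.rangeRestrict := by
      rw [LinearMap.exact_iff, LinearMap.ker_rangeRestrict, hd]
      exact (LinearMap.span_singleton_eq_range ℤ ℤ d)
    have hT := rTensor_exact (R := ℤ) Zhat hexact f.surjective_rangeRestrict
    have hsubinj : Function.Injective (LinearMap.rTensor Zhat (LinearMap.range f).subtype) :=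
      Module.Flat.rTensor_preserves_injective_linearMap _ (Submodule.injective_subtype _)
    have h2 : LinearMap.rTensor Zhat f.rangeRestrict ((1:ℤ) ⊗ₜ[ℤ] (1:Zhat)) = 0 := by
      apply hsubinj
      rw [map_zero, LinearMap.rTensor_tmul, LinearMap.rTensor_tmul]
      have : (LinearMap.range f).subtype (f.rangeRestrict 1) = m := by
        simp [hf]
      rw [this]
      exact hZ
    obtain ⟨w, hw⟩ := (hT _).mp h2
    set L := TensorProduct.lid ℤ Zhat
    have hlid : ∀ z : ℤ ⊗[ℤ] Zhat,
        L (LinearMap.rTensor Zhat (LinearMap.toSpanSingleton ℤ ℤ d) z) = d • L z := by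
      intro z
      induction z using TensorProduct.induction_on with
      | zero => simp
      | tmul a b =>
          simp only [L, LinearMap.rTensor_tmul, TensorProduct.lid_tmul,
            LinearMap.toSpanSingleton_apply, smul_smul, smul_eq_mul, mul_comm]
      | add x y hx hy => simp [map_add, hx, hy, smul_add]
    have hone : d • L w = 1 := by
      have := hlid w
      rw [hw] at this
      simpa [L] using this.symm
    have hdu : IsUnit d := isUnit_of_smul_eq_one _ hone
    have hker : LinearMap.ker f = ⊤ := by
      rw [hd]; exact Ideal.span_singleton_eq_top.mpr hdu
    have h1mem : (1:ℤ) ∈ LinearMap.ker f := hker ▸ Submodule.mem_top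
    simpa [hf] using h1mem
  intro x y hxy
  have : fractureFirst M (x - y) = 0 := by rw [map_sub, hxy, sub_self]
  exact sub_eq_zero.mp (h0 _ this)

/-! ### Transfer along the canonical isomorphisms -/

/-- The canonical isomorphism `M ⊗ (ℚ × Zhat) ≃ (M ⊗ ℚ) × (M ⊗ Zhat)`. -/
noncomputable def e : M ⊗[ℤ] (ℚ × Zhat) ≃ₗ[ℤ] (M ⊗[ℤ] ℚ) × (M ⊗[ℤ] Zhat) :=
  TensorProduct.prodRight ℤ ℤ M ℚ Zhat

lemma first_eq : fractureFirst M = ((e M).toLinearMap.comp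
    ((LinearMap.lTensor M f0).comp ((TensorProduct.rid ℤ M).symm.toLinearMap))) := by
  apply LinearMap.ext
  intro m
  simp only [fractureFirst, f0, e, TensorProduct.rid_symm_apply, LinearMap.comp_apply,
    LinearEquiv.coe_coe, LinearMap.lTensor_tmul, LinearMap.prod_apply, Function.prod,
    Algebra.linearMap_apply, map_one, LinearMap.flip_apply, TensorProduct.mk_apply]
  rfl

lemma second_eq : (fractureSecond M).comp (e M).toLinearMap = LinearMap.lTensor M g0 := by
  apply TensorProduct.ext'
  rintro m ⟨q, a⟩
  exact (congrArg (fractureSecond M) (TensorProduct.prodRight_tmul ℤ ℤ M ℚ Zhat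
    m (q, a))).trans (TensorProduct.tmul_sub _ _ _).symm

end Fracture

/-- The arithmetic fracture square for an arbitrary abelian group `M`: the sequence
`0 → M → (M ⊗ ℚ) ⊕ (M ⊗ ∏ₚ ℤₚ) → M ⊗ (∏ₚ ℤₚ) ⊗ ℚ → 0` is exact; equivalently `M`
is the pullback of its rationalization and its tensor with the profinite completion. -/
theorem fracture_square_exact :
    Function.Injective (fractureFirst M) ∧
      Function.Exact (fractureFirst M) (fractureSecond M) ∧
      Function.Surjective (fractureSecond M) := by
  have h2 : ∀ y, fractureSecond M y =
      LinearMap.lTensor M Fracture.g0 ((Fracture.e M).symm y) := fun y => by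
    have := LinearMap.congr_fun (Fracture.second_eq M) ((Fracture.e M).symm y)
    simp only [LinearMap.comp_apply, LinearEquiv.coe_coe, LinearEquiv.apply_symm_apply] at this
    exact this
  refine ⟨Fracture.first_inj M, ?_, ?_⟩
  · have hE := lTensor_exact (R := ℤ) M Fracture.exact0 Fracture.surj0
    intro y
    rw [h2 y, hE ((Fracture.e M).symm y)]
    constructor
    · rintro ⟨x, hx⟩
      refine ⟨TensorProduct.rid ℤ M x, ?_⟩
      rw [LinearMap.congr_fun (Fracture.first_eq M) ((TensorProduct.rid ℤ M) x)]
      exact (congrArg (Fracture.e M) ((congrArg (LinearMap.lTensor M Fracture.f0)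
        ((TensorProduct.rid ℤ M).symm_apply_apply x)).trans hx)).trans
        ((Fracture.e M).apply_symm_apply y)
    · rintro ⟨m, rfl⟩
      refine ⟨(TensorProduct.rid ℤ M).symm m, ?_⟩
      rw [LinearMap.congr_fun (Fracture.first_eq M) m]
      exact ((Fracture.e M).symm_apply_apply _).symm
  · intro z
    obtain ⟨w, hw⟩ := LinearMap.lTensor_surjective M (g := Fracture.g0) Fracture.surj0 z
    refine ⟨(Fracture.e M) w, ?_⟩
    rw [← hw]
    have := LinearMap.congr_fun (Fracture.second_eq M) w
    exact this
end

section
/- Let R be a commutative ring with R-algebras R^l, R^c, R^t fitting in a commutative square R → R^l → R^t, R → R^c → R^t, such that the sequence of R-modules 0 → R → R^l ⊕ R^c → R^t → 0 (with maps r ↦ (r,r) and (x,y) ↦ x − y) is exact and R^t is flat as an R-module. Then for every R-module M the sequence 0 → M → (R^l ⊗_R M) ⊕ (R^c ⊗_R M) → R^t ⊗_R M → 0 is exact; in particular M is the pullback of R^l ⊗_R M and R^c ⊗_R M over R^t ⊗_R M. -/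
open scoped TensorProduct

variable (R Rl Rc Rt : Type) [CommRing R] [CommRing Rl] [CommRing Rc] [CommRing Rt]
  [Algebra R Rl] [Algebra R Rc] [Algebra R Rt]
  [Algebra Rl Rt] [Algebra Rc Rt] [IsScalarTower R Rl Rt] [IsScalarTower R Rc Rt]

/-- The map `R → R^l ⊕ R^c`, `r ↦ (r, r)`. -/
noncomputable def hasseRingFirst : R →ₗ[R] Rl × Rc :=
  (Algebra.linearMap R Rl).prod (Algebra.linearMap R Rc)

/-- The difference map `R^l ⊕ R^c → R^t`, `(x, y) ↦ x - y`. -/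
noncomputable def hasseRingSecond : Rl × Rc →ₗ[R] Rt :=
  ((IsScalarTower.toAlgHom R Rl Rt).toLinearMap.comp (LinearMap.fst R Rl Rc)) -
    ((IsScalarTower.toAlgHom R Rc Rt).toLinearMap.comp (LinearMap.snd R Rl Rc))

/-- The map `M → (R^l ⊗_R M) ⊕ (R^c ⊗_R M)`, `m ↦ (1 ⊗ m, 1 ⊗ m)`. -/
noncomputable def hasseModFirst (M : Type) [AddCommGroup M] [Module R M] :
    M →ₗ[R] (Rl ⊗[R] M) × (Rc ⊗[R] M) :=
  ((TensorProduct.mk R Rl M) (1 : Rl)).prod ((TensorProduct.mk R Rc M) (1 : Rc))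

/-- The difference map `(R^l ⊗_R M) ⊕ (R^c ⊗_R M) → R^t ⊗_R M`. -/
noncomputable def hasseModSecond (M : Type) [AddCommGroup M] [Module R M] :
    (Rl ⊗[R] M) × (Rc ⊗[R] M) →ₗ[R] Rt ⊗[R] M :=
  ((LinearMap.rTensor M (IsScalarTower.toAlgHom R Rl Rt).toLinearMap).comp
      (LinearMap.fst R (Rl ⊗[R] M) (Rc ⊗[R] M))) -
    ((LinearMap.rTensor M (IsScalarTower.toAlgHom R Rc Rt).toLinearMap).comp
      (LinearMap.snd R (Rl ⊗[R] M) (Rc ⊗[R] M)))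

open Function LinearMap in
/-- If `0 → A → B → C → 0` is exact with `C` flat, then `A ⊗ M → B ⊗ M` is injective. -/
theorem rTensor_injective_of_exact_of_flat
    {R : Type} [CommRing R] {A B C : Type}
    [AddCommGroup A] [Module R A] [AddCommGroup B] [Module R B] [AddCommGroup C] [Module R C]
    {f : A →ₗ[R] B} {g : B →ₗ[R] C}
    (hfg : Function.Exact f g) (hg : Function.Surjective g) (hf : Function.Injective f)
    [Module.Flat R C] (M : Type) [AddCommGroup M] [Module R M] :
    Function.Injective (f.rTensor M) := by
  rw [← LinearMap.lTensor_inj_iff_rTensor_inj]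
  let π : (M →₀ R) →ₗ[R] M := Finsupp.linearCombination R id
  have hπ : Function.Surjective π := Finsupp.linearCombination_id_surjective R M
  exact lTensor_injective_of_exact_of_exact_of_rTensor_injective
    (LinearMap.exact_subtype_ker_map π) hπ hfg hg
    (Module.Flat.rTensor_preserves_injective_linearMap _ (Submodule.injective_subtype _))
    (Module.Flat.lTensor_preserves_injective_linearMap f hf)

/-- The algebraic Hasse square principle: if `0 → R → R^l ⊕ R^c → R^t → 0` is exact
and `R^t` is flat over `R`, then for every `R`-module `M` the sequence
`0 → M → (R^l ⊗_R M) ⊕ (R^c ⊗_R M) → R^t ⊗_R M → 0` is exact; in particular `M` is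
the pullback of `R^l ⊗_R M` and `R^c ⊗_R M` over `R^t ⊗_R M`. -/
theorem hasse_square_tensor_exact
    (hinj : Function.Injective (hasseRingFirst R Rl Rc))
    (hex : Function.Exact (hasseRingFirst R Rl Rc) (hasseRingSecond R Rl Rc Rt))
    (hsurj : Function.Surjective (hasseRingSecond R Rl Rc Rt))
    (hflat : Module.Flat R Rt)
    (M : Type) [AddCommGroup M] [Module R M] :
    Function.Injective (hasseModFirst R Rl Rc M) ∧
      Function.Exact (hasseModFirst R Rl Rc M) (hasseModSecond R Rl Rc Rt M) ∧
      Function.Surjective (hasseModSecond R Rl Rc Rt M) := by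
  classical
  let f := hasseRingFirst R Rl Rc
  let g := hasseRingSecond R Rl Rc Rt
  let e0 : M ≃ₗ[R] R ⊗[R] M := (TensorProduct.lid R M).symm
  let e1 : (Rl × Rc) ⊗[R] M ≃ₗ[R] (Rl ⊗[R] M) × (Rc ⊗[R] M) :=
    TensorProduct.prodLeft R R Rl Rc M
  have h1 : ∀ m : M, e1 (f.rTensor M (e0 m)) = hasseModFirst R Rl Rc M m := by
    intro m
    simp [e0, e1, f, hasseRingFirst, hasseModFirst, ← Prod.mk_one_one]
  have h2 : ∀ x, hasseModSecond R Rl Rc Rt M (e1 x) = g.rTensor M x := by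
    have : (hasseModSecond R Rl Rc Rt M).comp (e1 : (Rl × Rc) ⊗[R] M →ₗ[R] _) =
        g.rTensor M := by
      apply TensorProduct.ext'
      rintro ⟨x, y⟩ m
      simp [e1, g, hasseRingSecond, hasseModSecond, TensorProduct.sub_tmul]
    intro x
    exact DFunLike.congr_fun this x
  have hrinj : Function.Injective (f.rTensor M) :=
    rTensor_injective_of_exact_of_flat hex hsurj hinj M
  have hrex : Function.Exact (f.rTensor M) (g.rTensor M) := rTensor_exact M hex hsurj
  refine ⟨?_, ?_, ?_⟩
  · intro m m' h
    have : e1 (f.rTensor M (e0 m)) = e1 (f.rTensor M (e0 m')) := by rw [h1, h1, h]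
    exact e0.injective (hrinj (e1.injective this))
  · intro y
    constructor
    · intro h
      have hz : g.rTensor M (e1.symm y) = 0 := by
        rw [← h2, e1.apply_symm_apply, h]
      obtain ⟨x, hx⟩ := (hrex _).mp hz
      refine ⟨TensorProduct.lid R M x, ?_⟩
      have : e0 ((TensorProduct.lid R M) x) = x := (TensorProduct.lid R M).symm_apply_apply x
      rw [← h1, this, hx, e1.apply_symm_apply]
    · rintro ⟨m, rfl⟩
      rw [← h1, h2]
      exact hrex.apply_apply_eq_zero _
  · intro z
    obtain ⟨x, hx⟩ := LinearMap.rTensor_surjective M hsurj z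
    exact ⟨e1 x, by rw [h2, hx]⟩
end

section
/- Let F : S → T and U : T → S be an adjoint pair of exact functors between compactly generated triangulated categories with coproducts, with U preserving coproducts. Let K be a set of compact objects of S such that for each A ∈ K the unit map A → U F A is an isomorphism. Then F and U restrict to mutually inverse equivalences between the localizing subcategory of S generated by K and the localizing subcategory of T generated by F(K). -/
open CategoryTheory CategoryTheory.Limits CategoryTheory.Pretriangulated

section Defs

variable (C : Type) [Category C] [Preadditive C] [HasZeroObject C]
  [HasShift C ℤ] [∀ n : ℤ, (shiftFunctor C n).Additive] [Pretriangulated C]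
  [HasCoproducts.{0} C]

/-- The canonical map `⊕ᵢ Hom(X, Yᵢ) → Hom(X, ∐ᵢ Yᵢ)`. -/
noncomputable def coproductComparison {ι : Type} [DecidableEq ι] (X : C) (Y : ι → C) :
    DirectSum ι (fun i => (X ⟶ Y i)) →+ (X ⟶ ∐ Y) :=
  DirectSum.toAddMonoid fun i =>
    { toFun := fun f => f ≫ Sigma.ι Y i
      map_zero' := by simp
      map_add' := by intros; simp [Preadditive.add_comp] }

/-- An object `X` is compact if `Hom(X, −)` commutes with arbitrary coproducts. -/
def IsCompactObj (X : C) : Prop :=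
  ∀ (ι : Type) (_ : DecidableEq ι) (Y : ι → C),
    Function.Bijective (coproductComparison C X Y)

/-- A class of objects of a triangulated category with coproducts is localizing if
it is closed under isomorphisms, shifts, cones of morphisms between its objects
(hence is a full triangulated subcategory), and arbitrary coproducts
(hence is also closed under retracts). -/
def IsLocalizingClass (P : Set C) : Prop :=
  (∀ X Y : C, (X ≅ Y) → X ∈ P → Y ∈ P) ∧
  (∀ X ∈ P, ∀ n : ℤ, X⟦n⟧ ∈ P) ∧
  (∀ T ∈ distTriang C, T.obj₁ ∈ P → T.obj₂ ∈ P → T.obj₃ ∈ P) ∧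
  (∀ (ι : Type) (Y : ι → C), (∀ i, Y i ∈ P) → (∐ Y) ∈ P)

/-- The localizing subcategory generated by a set of objects: the smallest
localizing class containing it. -/
def locGen (K : Set C) : Set C :=
  ⋂₀ {P : Set C | IsLocalizingClass C P ∧ K ⊆ P}

/-- A triangulated category with coproducts is compactly generated if there is a set
of compact objects whose generated localizing subcategory is everything. -/
def IsCompactlyGeneratedTriang : Prop :=
  ∃ G : Set C, (∀ X ∈ G, IsCompactObj C X) ∧ locGen C G = Set.univ

end Defs

set_option linter.unusedSectionVars false

section GoodAux

variable {C : Type} [Category C] {D : Type} [Category D]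

/-- `G` is bijective on homs into `X`. -/
def GoodAt (G : C ⥤ D) (X : C) : Prop :=
  ∀ V : C, Function.Bijective (fun g : V ⟶ X => G.map g)

/-- `G` is bijective on homs out of `Y`. -/
def CoGoodAt (G : C ⥤ D) (Y : C) : Prop :=
  ∀ W : C, Function.Bijective (fun g : Y ⟶ W => G.map g)

variable [HasShift C ℤ] [HasShift D ℤ]

lemma GoodAt.shift {G : C ⥤ D} [G.CommShift ℤ] {X : C} (h : GoodAt G X) (n : ℤ) :
    GoodAt G (X⟦n⟧) := by
  intro V
  let ε : (shiftFunctor C (-n) ⋙ shiftFunctor C n).obj V ≅ V :=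
    (shiftFunctorCompIsoId C (-n) n (by omega)).app V
  constructor
  · intro g₁ g₂ hg
    replace hg : G.map g₁ = G.map g₂ := hg
    obtain ⟨u₁, hu₁⟩ := (shiftFunctor C n).map_surjective (ε.hom ≫ g₁)
    obtain ⟨u₂, hu₂⟩ := (shiftFunctor C n).map_surjective (ε.hom ≫ g₂)
    have e1 : G.map (u₁⟦n⟧') = G.map (u₂⟦n⟧') := by
      rw [hu₁, hu₂, G.map_comp, G.map_comp, hg]
    have e2 : (G.commShiftIso n).hom.app (V⟦(-n : ℤ)⟧) ≫ (G.map u₁)⟦n⟧' =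
        (G.commShiftIso n).hom.app (V⟦(-n : ℤ)⟧) ≫ (G.map u₂)⟦n⟧' := by
      rw [← G.commShiftIso_hom_naturality, ← G.commShiftIso_hom_naturality, e1]
    have e3 : G.map u₁ = G.map u₂ :=
      (shiftFunctor D n).map_injective ((cancel_epi _).mp e2)
    have e4 : u₁ = u₂ := (h _).1 e3
    have : ε.hom ≫ g₁ = ε.hom ≫ g₂ := by rw [← hu₁, ← hu₂, e4]
    exact (cancel_epi _).mp this
  · intro y
    obtain ⟨w, hw⟩ := (shiftFunctor D n).map_surjective
      ((G.commShiftIso n).inv.app (V⟦(-n : ℤ)⟧) ≫ G.map ε.hom ≫ y ≫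
        (G.commShiftIso n).hom.app X)
    obtain ⟨u, hu⟩ := (h _).2 w
    replace hu : G.map u = w := hu
    refine ⟨ε.inv ≫ u⟦n⟧', ?_⟩
    have nat : G.map (u⟦n⟧') ≫ (G.commShiftIso n).hom.app X =
        (G.commShiftIso n).hom.app (V⟦(-n : ℤ)⟧) ≫ (G.map u)⟦n⟧' :=
      G.commShiftIso_hom_naturality u n
    rw [hu, hw] at nat
    simp only [Category.assoc, Iso.hom_inv_id_app_assoc] at nat
    have nat' : G.map (u⟦n⟧') = G.map ε.hom ≫ y := by
      have := congrArg (fun t => t ≫ (G.commShiftIso n).inv.app X) nat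
      simpa using this
    show G.map (ε.inv ≫ u⟦n⟧') = y
    rw [G.map_comp, nat', ← Category.assoc, ← G.map_comp, Iso.inv_hom_id, G.map_id,
      Category.id_comp]

lemma CoGoodAt.shift {G : C ⥤ D} [G.CommShift ℤ] {Y : C} (h : CoGoodAt G Y) (n : ℤ) :
    CoGoodAt G (Y⟦n⟧) := by
  intro W
  let ε : (shiftFunctor C (-n) ⋙ shiftFunctor C n).obj W ≅ W :=
    (shiftFunctorCompIsoId C (-n) n (by omega)).app W
  constructor
  · intro g₁ g₂ hg
    replace hg : G.map g₁ = G.map g₂ := hg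
    obtain ⟨u₁, hu₁⟩ := (shiftFunctor C n).map_surjective (g₁ ≫ ε.inv)
    obtain ⟨u₂, hu₂⟩ := (shiftFunctor C n).map_surjective (g₂ ≫ ε.inv)
    have e1 : G.map (u₁⟦n⟧') = G.map (u₂⟦n⟧') := by
      rw [hu₁, hu₂, G.map_comp, G.map_comp, hg]
    have e2 : (G.commShiftIso n).hom.app Y ≫ (G.map u₁)⟦n⟧' =
        (G.commShiftIso n).hom.app Y ≫ (G.map u₂)⟦n⟧' := by
      rw [← G.commShiftIso_hom_naturality, ← G.commShiftIso_hom_naturality, e1]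
    have e4 : u₁ = u₂ := (h _).1 ((shiftFunctor D n).map_injective ((cancel_epi _).mp e2))
    have : g₁ ≫ ε.inv = g₂ ≫ ε.inv := by rw [← hu₁, ← hu₂, e4]
    exact (cancel_mono _).mp this
  · intro y
    obtain ⟨w, hw⟩ := (shiftFunctor D n).map_surjective
      ((G.commShiftIso n).inv.app Y ≫ y ≫ G.map ε.inv ≫
        (G.commShiftIso n).hom.app (W⟦(-n : ℤ)⟧))
    obtain ⟨u, hu⟩ := (h _).2 w
    replace hu : G.map u = w := hu
    refine ⟨u⟦n⟧' ≫ ε.hom, ?_⟩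
    have nat : G.map (u⟦n⟧') ≫ (G.commShiftIso n).hom.app (W⟦(-n : ℤ)⟧) =
        (G.commShiftIso n).hom.app Y ≫ (G.map u)⟦n⟧' :=
      G.commShiftIso_hom_naturality u n
    rw [hu, hw] at nat
    simp only [Category.assoc, Iso.hom_inv_id_app_assoc] at nat
    have nat' : G.map (u⟦n⟧') = y ≫ G.map ε.inv := by
      have := congrArg (fun t => t ≫ (G.commShiftIso n).inv.app (W⟦(-n : ℤ)⟧)) nat
      simpa using this
    show G.map (u⟦n⟧' ≫ ε.hom) = y
    rw [G.map_comp, nat', Category.assoc, ← G.map_comp, Iso.inv_hom_id, G.map_id,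
      Category.comp_id]

end GoodAux

section ConeAux

variable {C : Type} [Category C] [Preadditive C] [HasZeroObject C]
  [HasShift C ℤ] [∀ n : ℤ, (shiftFunctor C n).Additive] [Pretriangulated C]
variable {D : Type} [Category D] [Preadditive D] [HasZeroObject D]
  [HasShift D ℤ] [∀ n : ℤ, (shiftFunctor D n).Additive] [Pretriangulated D]
variable {G : C ⥤ D} [G.CommShift ℤ] [G.IsTriangulated]

lemma GoodAt.cone {Tr : Triangle C} (hTr : Tr ∈ distTriang C)
    (h₁ : GoodAt G Tr.obj₁) (h₂ : GoodAt G Tr.obj₂) : GoodAt G Tr.obj₃ := by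
  have hTD : Triangle.mk' (G.obj Tr.obj₁) (G.obj Tr.obj₂) (G.obj Tr.obj₃) (G.map Tr.mor₁)
        (G.map Tr.mor₂) (G.map Tr.mor₃ ≫ (G.commShiftIso (1:ℤ)).hom.app Tr.obj₁) ∈ distTriang D := G.map_distinguished _ hTr
  have h₁' : GoodAt G (Tr.obj₁⟦(1:ℤ)⟧) := h₁.shift 1
  have h₂' : GoodAt G (Tr.obj₂⟦(1:ℤ)⟧) := h₂.shift 1
  intro V
  constructor
  · intro g₁ g₂ hg
    replace hg : G.map g₁ = G.map g₂ := hg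
    rw [← sub_eq_zero] at hg ⊢
    rw [← G.map_sub] at hg
    set g := g₁ - g₂ with hgdef
    have z1 : g ≫ Tr.mor₃ = 0 := by
      apply (h₁' V).1
      show G.map (g ≫ Tr.mor₃) = G.map 0
      rw [G.map_comp, hg, zero_comp, G.map_zero]
    obtain ⟨w, hw⟩ := Triangle.coyoneda_exact₃ Tr hTr g z1
    have z2 : (G.map w : G.obj V ⟶ G.obj Tr.obj₂) ≫
        G.map Tr.mor₂ = 0 := by
      rw [← G.map_comp, ← hw, hg]
    obtain ⟨z, hz⟩ := Triangle.coyoneda_exact₂ _ hTD (G.map w) z2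
    obtain ⟨u, hu⟩ := (h₁ V).2 z
    replace hu : G.map u = z := hu
    have hwu : w = u ≫ Tr.mor₁ := by
      apply (h₂ V).1
      show G.map w = G.map (u ≫ Tr.mor₁)
      rw [G.map_comp, hu]
      exact hz
    rw [hw, hwu, Category.assoc, comp_distTriang_mor_zero₁₂ Tr hTr, comp_zero]
  · intro y
    obtain ⟨hh, hhh⟩ := (h₁' V).2
      (y ≫ (G.map Tr.mor₃ ≫ (G.commShiftIso (1:ℤ)).hom.app Tr.obj₁) ≫ (G.commShiftIso (1:ℤ)).inv.app Tr.obj₁)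
    replace hhh : G.map hh =
        y ≫ (G.map Tr.mor₃ ≫ (G.commShiftIso (1:ℤ)).hom.app Tr.obj₁) ≫ (G.commShiftIso (1:ℤ)).inv.app Tr.obj₁ := hhh
    have hcomp : hh ≫ Tr.mor₁⟦(1:ℤ)⟧' = 0 := by
      apply (h₂' V).1
      show G.map (hh ≫ Tr.mor₁⟦(1:ℤ)⟧') = G.map 0
      rw [G.map_zero, G.map_comp, ← cancel_mono ((G.commShiftIso (1:ℤ)).hom.app Tr.obj₂),
        Category.assoc, G.commShiftIso_hom_naturality, hhh, zero_comp]
      simp only [Category.assoc, Iso.inv_hom_id_app_assoc]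
      have := comp_distTriang_mor_zero₃₁ _ hTD
      dsimp at this
      simp only [Category.assoc] at this ⊢
      rw [this, comp_zero]
    obtain ⟨g₀, hg₀⟩ := Triangle.coyoneda_exact₁ Tr hTr hh hcomp
    have key : G.map g₀ ≫ (G.map Tr.mor₃ ≫ (G.commShiftIso (1:ℤ)).hom.app Tr.obj₁) = y ≫ (G.map Tr.mor₃ ≫ (G.commShiftIso (1:ℤ)).hom.app Tr.obj₁) := by
      rw [← Category.assoc, ← G.map_comp, ← hg₀, hhh]
      simp only [Category.assoc, Iso.inv_hom_id_app]
      simp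
    have z3 : (y - G.map g₀) ≫ (G.map Tr.mor₃ ≫ (G.commShiftIso (1:ℤ)).hom.app Tr.obj₁) = 0 := by
      rw [Preadditive.sub_comp, key, sub_self]
    obtain ⟨z, hz⟩ := Triangle.coyoneda_exact₃ _ hTD (y - G.map g₀) z3
    obtain ⟨w, hw⟩ := (h₂ V).2 z
    replace hw : G.map w = z := hw
    refine ⟨g₀ + w ≫ Tr.mor₂, ?_⟩
    show G.map (g₀ + w ≫ Tr.mor₂) = y
    rw [G.map_add, G.map_comp, hw]
    have : (z ≫ G.map Tr.mor₂ : G.obj V ⟶ G.obj Tr.obj₃) = y - G.map g₀ := by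
      rw [hz]
    rw [this]; abel

lemma CoGoodAt.cone {Tr : Triangle C} (hTr : Tr ∈ distTriang C)
    (h₁ : CoGoodAt G Tr.obj₁) (h₂ : CoGoodAt G Tr.obj₂) : CoGoodAt G Tr.obj₃ := by
  have hTD : Triangle.mk' (G.obj Tr.obj₁) (G.obj Tr.obj₂) (G.obj Tr.obj₃) (G.map Tr.mor₁)
        (G.map Tr.mor₂) (G.map Tr.mor₃ ≫ (G.commShiftIso (1:ℤ)).hom.app Tr.obj₁) ∈ distTriang D := G.map_distinguished _ hTr
  have h₁' : CoGoodAt G (Tr.obj₁⟦(1:ℤ)⟧) := h₁.shift 1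
  have h₂' : CoGoodAt G (Tr.obj₂⟦(1:ℤ)⟧) := h₂.shift 1
  intro W
  constructor
  · intro g₁ g₂ hg
    replace hg : G.map g₁ = G.map g₂ := hg
    rw [← sub_eq_zero] at hg ⊢
    rw [← G.map_sub] at hg
    set g := g₁ - g₂ with hgdef
    have z1 : Tr.mor₂ ≫ g = 0 := by
      apply (h₂ W).1
      show G.map (Tr.mor₂ ≫ g) = G.map 0
      rw [G.map_comp, hg, comp_zero, G.map_zero]
    obtain ⟨h, hh⟩ := Triangle.yoneda_exact₃ Tr hTr g z1
    -- (G.mapTriangle.obj Tr).mor₃ ≫ (inv ≫ G.map h) = 0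
    have z2 : (G.map Tr.mor₃ ≫ (G.commShiftIso (1:ℤ)).hom.app Tr.obj₁) ≫
        ((G.commShiftIso (1:ℤ)).inv.app Tr.obj₁ ≫ G.map h) = 0 := by
      simp only [Category.assoc, Iso.hom_inv_id_app_assoc]
      rw [← G.map_comp, ← hh, hg]
    obtain ⟨k, hk⟩ : ∃ k : (G.obj Tr.obj₂)⟦(1:ℤ)⟧ ⟶ G.obj W,
        (G.commShiftIso (1:ℤ)).inv.app Tr.obj₁ ≫ G.map h = (-((G.map Tr.mor₁)⟦(1:ℤ)⟧')) ≫ k :=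
      by
        obtain ⟨k, hk⟩ := Triangle.yoneda_exact₂ _
          (rot_of_distTriang _ (rot_of_distTriang _ hTD)) _ z2
        exact ⟨k, hk.trans rfl⟩
    -- hk : inv ≫ G.map h = (rot² TD).mor₂ ≫ k  with (rot² TD).mor₂ = -(TD.mor₁⟦1⟧)
    obtain ⟨t, ht⟩ := (h₂' W).2 ((G.commShiftIso (1:ℤ)).hom.app Tr.obj₂ ≫ k)
    replace ht : G.map t = (G.commShiftIso (1:ℤ)).hom.app Tr.obj₂ ≫ k := ht
    have key : G.map (Tr.mor₁⟦(1:ℤ)⟧' ≫ t) = - G.map h := by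
      rw [G.map_comp, ht, ← Category.assoc, G.commShiftIso_hom_naturality]
      have hk' : (G.map Tr.mor₁)⟦(1:ℤ)⟧' ≫ k =
          - ((G.commShiftIso (1:ℤ)).inv.app Tr.obj₁ ≫ G.map h) := by
        rw [hk]; simp
      rw [Category.assoc, hk']
      simp
    have hzero : h + Tr.mor₁⟦(1:ℤ)⟧' ≫ t = 0 := by
      apply (h₁' W).1
      show G.map _ = G.map 0
      rw [G.map_add, key, G.map_zero]; abel
    have hheq : h = - (Tr.mor₁⟦(1:ℤ)⟧' ≫ t) := by
      rw [← sub_eq_zero]; rw [sub_neg_eq_add, add_comm] at *; exact hzero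
    rw [hh, hheq]
    rw [Preadditive.comp_neg, ← Category.assoc, comp_distTriang_mor_zero₃₁ Tr hTr,
      zero_comp, neg_zero]
  · intro y
    obtain ⟨s, hs⟩ := (h₂ W).2 (G.map Tr.mor₂ ≫ y)
    replace hs : G.map s = G.map Tr.mor₂ ≫ y := hs
    have z1 : Tr.mor₁ ≫ s = 0 := by
      apply (h₁ W).1
      show G.map (Tr.mor₁ ≫ s) = G.map 0
      rw [G.map_comp, hs, G.map_zero, ← Category.assoc, ← G.map_comp,
        comp_distTriang_mor_zero₁₂ Tr hTr, G.map_zero, zero_comp]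
    obtain ⟨g₀, hg₀⟩ := Triangle.yoneda_exact₂ Tr hTr s z1
    have z2 : G.map Tr.mor₂ ≫ (y - G.map g₀) = 0 := by
      rw [Preadditive.comp_sub, ← hs, hg₀, G.map_comp, sub_self]
    obtain ⟨k, hk⟩ := Triangle.yoneda_exact₃ _ hTD _ z2
    obtain ⟨t, ht⟩ := (h₁' W).2 ((G.commShiftIso (1:ℤ)).hom.app Tr.obj₁ ≫ k)
    replace ht : G.map t = (G.commShiftIso (1:ℤ)).hom.app Tr.obj₁ ≫ k := ht
    refine ⟨g₀ + Tr.mor₃ ≫ t, ?_⟩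
    show G.map (g₀ + Tr.mor₃ ≫ t) = y
    rw [G.map_add, G.map_comp, ht]
    have : (G.map Tr.mor₃ ≫ (G.commShiftIso (1:ℤ)).hom.app Tr.obj₁ ≫ k :
        G.obj Tr.obj₃ ⟶ G.obj W) = y - G.map g₀ := by
      rw [hk]; exact (Category.assoc _ _ _).symm
    rw [← Category.assoc, Category.assoc, this]; abel

end ConeAux

section AdjAux

variable {C : Type} [Category C] {D : Type} [Category D]
variable {F : C ⥤ D} {U : D ⥤ C} (adj : F ⊣ U)

lemma homEquiv_map_eq {V X : C} (g : V ⟶ X) :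
    adj.homEquiv V (F.obj X) (F.map g) = g ≫ adj.unit.app X := by
  rw [Adjunction.homEquiv_unit]; simp [← adj.unit.naturality g]

lemma homEquiv_counit_comp {Y W : D} (f : Y ⟶ W) :
    adj.homEquiv (U.obj Y) W (adj.counit.app Y ≫ f) = U.map f := by
  rw [Adjunction.homEquiv_unit]; simp

lemma isIso_unit_iff_goodAt (X : C) : IsIso (adj.unit.app X) ↔ GoodAt F X := by
  have comp_eq : ∀ V : C, (fun g : V ⟶ X => g ≫ adj.unit.app X)
      = (adj.homEquiv V (F.obj X)) ∘ (fun g : V ⟶ X => F.map g) := by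
    intro V; funext g; simp [homEquiv_map_eq adj g]
  constructor
  · intro hiso V
    have hb : Function.Bijective (fun g : V ⟶ X => g ≫ adj.unit.app X) := by
      constructor
      · intro a b hab; rwa [cancel_mono] at hab
      · intro t; exact ⟨t ≫ inv (adj.unit.app X), by simp⟩
    have : (fun g : V ⟶ X => F.map g)
        = (adj.homEquiv V (F.obj X)).symm ∘ (fun g : V ⟶ X => g ≫ adj.unit.app X) := by
      funext g; simp [Function.comp, ← homEquiv_map_eq adj g]
    rw [this]
    exact (adj.homEquiv V (F.obj X)).symm.bijective.comp hb
  · intro hg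
    have hb : ∀ V : C, Function.Bijective (fun g : V ⟶ X => g ≫ adj.unit.app X) := by
      intro V; rw [comp_eq V]
      exact (adj.homEquiv V (F.obj X)).bijective.comp (hg V)
    obtain ⟨h, hh⟩ := (hb (U.obj (F.obj X))).2 (𝟙 _)
    replace hh : h ≫ adj.unit.app X = 𝟙 _ := hh
    have hh2 : adj.unit.app X ≫ h = 𝟙 X := by
      apply (hb X).1
      show (adj.unit.app X ≫ h) ≫ adj.unit.app X = 𝟙 X ≫ adj.unit.app X
      rw [Category.assoc, hh]; simp
    exact ⟨h, hh2, hh⟩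

lemma isIso_counit_iff_coGoodAt (Y : D) : IsIso (adj.counit.app Y) ↔ CoGoodAt U Y := by
  have comp_eq : ∀ W : D, (fun f : Y ⟶ W => adj.counit.app Y ≫ f)
      = (adj.homEquiv (U.obj Y) W).symm ∘ (fun f : Y ⟶ W => U.map f) := by
    intro W; funext f
    simp [Function.comp, ← homEquiv_counit_comp adj f]
  constructor
  · intro hiso W
    have hb : Function.Bijective (fun f : Y ⟶ W => adj.counit.app Y ≫ f) := by
      constructor
      · intro a b hab; rwa [cancel_epi] at hab
      · intro t; exact ⟨inv (adj.counit.app Y) ≫ t, by simp⟩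
    have : (fun f : Y ⟶ W => U.map f)
        = (adj.homEquiv (U.obj Y) W) ∘ (fun f : Y ⟶ W => adj.counit.app Y ≫ f) := by
      funext f; simp [Function.comp, homEquiv_counit_comp adj f]
    rw [this]
    exact (adj.homEquiv (U.obj Y) W).bijective.comp hb
  · intro hg
    have hb : ∀ W : D, Function.Bijective (fun f : Y ⟶ W => adj.counit.app Y ≫ f) := by
      intro W; rw [comp_eq W]
      exact (adj.homEquiv (U.obj Y) W).symm.bijective.comp (hg W)
    obtain ⟨e, he⟩ := (hb (F.obj (U.obj Y))).2 (𝟙 _)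
    replace he : adj.counit.app Y ≫ e = 𝟙 _ := he
    have he2 : e ≫ adj.counit.app Y = 𝟙 Y := by
      apply (hb Y).1
      show adj.counit.app Y ≫ e ≫ adj.counit.app Y = adj.counit.app Y ≫ 𝟙 Y
      rw [← Category.assoc, he]; simp
    exact ⟨e, he, he2⟩

end AdjAux

section CoprodAux

variable {C : Type} [Category C] {D : Type} [Category D]
  [HasCoproducts.{0} C] [HasCoproducts.{0} D]
variable {F : C ⥤ D} {U : D ⥤ C} (adj : F ⊣ U)
  [∀ ι : Type, PreservesColimitsOfShape (Discrete ι) U]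

lemma isIso_unit_coprod {ι : Type} (X : ι → C) (h : ∀ i, IsIso (adj.unit.app (X i))) :
    IsIso (adj.unit.app (∐ X)) := by
  haveI : PreservesColimitsOfSize.{0,0} F := adj.leftAdjoint_preservesColimits
  have heq : adj.unit.app (∐ X) =
      Limits.Sigma.map (fun i => adj.unit.app (X i)) ≫ sigmaComparison (F ⋙ U) X := by
    apply Sigma.hom_ext; intro i
    simp only [Sigma.ι_map_assoc, ι_comp_sigmaComparison]
    exact (adj.unit.naturality (Sigma.ι X i))
  rw [heq]
  have : Limits.Sigma.map (fun i => adj.unit.app (X i)) =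
      (Limits.Sigma.mapIso (fun i => asIso (adj.unit.app (X i)))).hom := by
    apply Sigma.hom_ext; intro i; simp
  rw [this]
  infer_instance

lemma isIso_counit_coprod {ι : Type} (Y : ι → D) (h : ∀ i, IsIso (adj.counit.app (Y i))) :
    IsIso (adj.counit.app (∐ Y)) := by
  haveI : PreservesColimitsOfSize.{0,0} F := adj.leftAdjoint_preservesColimits
  have heq : sigmaComparison (U ⋙ F) Y ≫ adj.counit.app (∐ Y) =
      Limits.Sigma.map (fun i => adj.counit.app (Y i)) := by
    ext i
    simp only [ι_comp_sigmaComparison_assoc, Sigma.ι_map]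
    exact adj.counit.naturality (Sigma.ι Y i)
  have h2 : adj.counit.app (∐ Y) =
      inv (sigmaComparison (U ⋙ F) Y) ≫ Limits.Sigma.map (fun i => adj.counit.app (Y i)) := by
    rw [← heq, IsIso.inv_hom_id_assoc]
  rw [h2]
  have : Limits.Sigma.map (fun i => adj.counit.app (Y i)) =
      (Limits.Sigma.mapIso (fun i => asIso (adj.counit.app (Y i)))).hom := by
    apply Sigma.hom_ext; intro i; simp
  rw [this]
  infer_instance

end CoprodAux

section LocAux

variable (C : Type) [Category C] [Preadditive C] [HasZeroObject C]
  [HasShift C ℤ] [∀ n : ℤ, (shiftFunctor C n).Additive] [Pretriangulated C]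
  [HasCoproducts.{0} C]

lemma subset_locGen (K : Set C) : K ⊆ locGen C K :=
  fun _ hx => Set.mem_sInter.mpr fun _ hP => hP.2 hx

lemma locGen_subset {K P : Set C} (hP : IsLocalizingClass C P) (hKP : K ⊆ P) :
    locGen C K ⊆ P := fun _ hx => Set.mem_sInter.mp hx P ⟨hP, hKP⟩

lemma locGen_isLocalizing (K : Set C) : IsLocalizingClass C (locGen C K) := by
  refine ⟨?_, ?_, ?_, ?_⟩
  · intro X Y e hX
    exact Set.mem_sInter.mpr fun P hP => hP.1.1 X Y e (Set.mem_sInter.mp hX P hP)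
  · intro X hX n
    exact Set.mem_sInter.mpr fun P hP => hP.1.2.1 X (Set.mem_sInter.mp hX P hP) n
  · intro Tr hTr h1 h2
    exact Set.mem_sInter.mpr fun P hP =>
      hP.1.2.2.1 Tr hTr (Set.mem_sInter.mp h1 P hP) (Set.mem_sInter.mp h2 P hP)
  · intro ι Y hY
    exact Set.mem_sInter.mpr fun P hP =>
      hP.1.2.2.2 ι Y fun i => Set.mem_sInter.mp (hY i) P hP

end LocAux

variable (S : Type) [Category S] [Preadditive S] [HasZeroObject S]
  [HasShift S ℤ] [∀ n : ℤ, (shiftFunctor S n).Additive] [Pretriangulated S]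
  [HasCoproducts.{0} S]
variable (T : Type) [Category T] [Preadditive T] [HasZeroObject T]
  [HasShift T ℤ] [∀ n : ℤ, (shiftFunctor T n).Additive] [Pretriangulated T]
  [HasCoproducts.{0} T]

/-- **The Cellularization Principle** (homotopy category form). Let `F ⊣ U` be an
adjoint pair of exact functors between compactly generated triangulated categories
with coproducts, with `U` preserving coproducts. If `K` is a set of compact objects
of `S` such that the unit `A → UFA` is an isomorphism for every `A ∈ K`, then `F` and
`U` restrict to mutually inverse equivalences between the localizing subcategory of
`S` generated by `K` and the localizing subcategory of `T` generated by `F(K)`: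
`F` and `U` map these subcategories into one another, and the unit and counit are
isomorphisms on them. -/
theorem cellularization_principle
    (F : S ⥤ T) (U : T ⥤ S) (adj : F ⊣ U)
    [F.CommShift ℤ] [F.IsTriangulated] [U.CommShift ℤ] [U.IsTriangulated]
    [∀ ι : Type, PreservesColimitsOfShape (Discrete ι) U]
    (hS : IsCompactlyGeneratedTriang S) (hT : IsCompactlyGeneratedTriang T)
    (K : Set S) (hK : ∀ A ∈ K, IsCompactObj S A)
    (hunit : ∀ A ∈ K, IsIso (adj.unit.app A)) :
    (∀ X ∈ locGen S K,
        F.obj X ∈ locGen T (F.obj '' K) ∧ IsIso (adj.unit.app X)) ∧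
    (∀ Y ∈ locGen T (F.obj '' K),
        U.obj Y ∈ locGen S K ∧ IsIso (adj.counit.app Y)) := by
  obtain ⟨isoS, shS, coneS, copS⟩ := locGen_isLocalizing S K
  obtain ⟨isoT, shT, coneT, copT⟩ := locGen_isLocalizing T (F.obj '' K)
  haveI : PreservesColimitsOfSize.{0,0} F := adj.leftAdjoint_preservesColimits
  constructor
  · -- the subcategory of `S` on which the conclusion of part 1 holds is localizing
    have hPS : IsLocalizingClass S
        {X | F.obj X ∈ locGen T (F.obj '' K) ∧ IsIso (adj.unit.app X)} := by
      refine ⟨?_, ?_, ?_, ?_⟩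
      · rintro X Y e ⟨m, hiso⟩
        refine ⟨isoT _ _ (F.mapIso e) m, ?_⟩
        have nat := adj.unit.naturality e.hom
        have heq : adj.unit.app Y = e.inv ≫ adj.unit.app X ≫ (F ⋙ U).map e.hom := by
          rw [← nat]; simp
        rw [heq]; infer_instance
      · rintro X ⟨m, hiso⟩ n
        refine ⟨isoT _ _ ((F.commShiftIso n).symm.app X) (shT _ m n), ?_⟩
        rw [isIso_unit_iff_goodAt] at hiso ⊢
        exact hiso.shift n
      · rintro Tr hTr ⟨m1, h1⟩ ⟨m2, h2⟩
        refine ⟨coneT (F.mapTriangle.obj Tr) (F.map_distinguished _ hTr) m1 m2, ?_⟩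
        rw [isIso_unit_iff_goodAt] at h1 h2 ⊢
        exact GoodAt.cone hTr h1 h2
      · intro ι X hX
        refine ⟨isoT _ _ (asIso (sigmaComparison F X)) (copT ι _ (fun i => (hX i).1)), ?_⟩
        exact isIso_unit_coprod adj X (fun i => (hX i).2)
    have hKPS : K ⊆ {X | F.obj X ∈ locGen T (F.obj '' K) ∧ IsIso (adj.unit.app X)} :=
      fun A hA => ⟨subset_locGen T (F.obj '' K) ⟨A, hA, rfl⟩, hunit A hA⟩
    intro X hX
    exact locGen_subset S hPS hKPS hX
  · have hPT : IsLocalizingClass T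
        {Y | U.obj Y ∈ locGen S K ∧ IsIso (adj.counit.app Y)} := by
      refine ⟨?_, ?_, ?_, ?_⟩
      · rintro Y Z e ⟨m, hiso⟩
        refine ⟨isoS _ _ (U.mapIso e) m, ?_⟩
        have nat := adj.counit.naturality e.hom
        have heq : adj.counit.app Z = inv ((U ⋙ F).map e.hom) ≫ adj.counit.app Y ≫ e.hom := by
          rw [IsIso.eq_inv_comp, nat]; simp
        rw [heq]; infer_instance
      · rintro Y ⟨m, hiso⟩ n
        refine ⟨isoS _ _ ((U.commShiftIso n).symm.app Y) (shS _ m n), ?_⟩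
        rw [isIso_counit_iff_coGoodAt] at hiso ⊢
        exact hiso.shift n
      · rintro Tr hTr ⟨m1, h1⟩ ⟨m2, h2⟩
        refine ⟨coneS (U.mapTriangle.obj Tr) (U.map_distinguished _ hTr) m1 m2, ?_⟩
        rw [isIso_counit_iff_coGoodAt] at h1 h2 ⊢
        exact CoGoodAt.cone hTr h1 h2
      · intro ι Y hY
        refine ⟨isoS _ _ (asIso (sigmaComparison U Y)) (copS ι _ (fun i => (hY i).1)), ?_⟩
        exact isIso_counit_coprod adj Y (fun i => (hY i).2)
    have hKPT : F.obj '' K ⊆ {Y | U.obj Y ∈ locGen S K ∧ IsIso (adj.counit.app Y)} := by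
      rintro _ ⟨A, hA, rfl⟩
      haveI := hunit A hA
      refine ⟨isoS _ _ (asIso (adj.unit.app A)) (subset_locGen S K hA), ?_⟩
      have tri : IsIso (F.map (adj.unit.app A) ≫ adj.counit.app (F.obj A)) := by
        rw [adj.left_triangle_components A]
        exact ⟨𝟙 _, by simp, by simp⟩
      exact IsIso.of_isIso_comp_left (F.map (adj.unit.app A)) (adj.counit.app (F.obj A))
    intro Y hY
    exact locGen_subset T hPT hKPT hY
end
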